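/- For every memory interval A and every level L of T, ordered left-to-right, the intersection A ∩ L is a contiguous subsequence of L. -/

import Mathlib

namespace VEB

inductive OTree : Type where
  | node : List OTree → OTree

def OTree.children : OTree → List OTree
  | .node cs => cs

mutual
  def height : OTree → ℕ
    | .node cs => 1 + heightList cs
  def heightList : List OTree → ℕ
    | [] => 0
    | c :: cs => max (height c) (heightList cs)
end

def subtreeAt? : OTree → List ℕ → Option OTree
  | t, [] => some t
  | t, i :: p =>
    match t.children[i]? with
    | some c => subtreeAt? c p
    | none => none

/-- `p` is (the path of) a vertex of `t`. -/
def IsVertex (t : OTree) (p : List ℕ) : Prop := (subtreeAt? t p).isSome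

/-- `p` is a leaf of `t`. -/
def IsLeaf (t : OTree) (p : List ℕ) : Prop := subtreeAt? t p = some (.node [])

/-- All leaves of `t` are at the same depth (the bottom level). -/
def Uniform (t : OTree) : Prop := ∀ p, IsLeaf t p → p.length + 1 = height t

/-- The top `m+1` levels of `t` (the truncation of height `m+1`). -/
def trunc : ℕ → OTree → OTree
  | 0, _ => .node []
  | m+1, t => .node (t.children.map (trunc m))

/-- Paths of the vertices at depth `m`, in left-to-right order. -/
def levelPaths : ℕ → OTree → List (List ℕ)
  | 0, _ => [[]]
  | m+1, t => (t.children.zipIdx.map fun ic => (levelPaths m ic.1).map (ic.2 :: ·)).flatten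

/-- The level at which a tree of height `h` is cut: `max ⌊ε h⌋ 1`. -/
noncomputable def cutLevel (ε : ℝ) (h : ℕ) : ℕ := max ⌊ε * (h : ℝ)⌋₊ 1

/-- The van Emde Boas order of the vertex paths of `t` (with recursion fuel). -/
noncomputable def vEBAux (ε : ℝ) : ℕ → OTree → List (List ℕ)
  | 0, _ => []
  | fuel+1, t =>
    if height t ≤ 1 then [[]]
    else
      let m := cutLevel ε (height t)
      vEBAux ε fuel (trunc (m - 1) t) ++
        ((levelPaths m t).map fun q =>
          match subtreeAt? t q with
          | some s => (vEBAux ε fuel s).map (q ++ ·)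
          | none => []).flatten

/-- The van Emde Boas order `vEB_ε(t)` of the vertex paths of `t`. -/
noncomputable def vEB (ε : ℝ) (t : OTree) : List (List ℕ) := vEBAux ε (height t) t

/-- Position (index) of vertex `p` in the van Emde Boas order. -/
noncomputable def pos (ε : ℝ) (t : OTree) (p : List ℕ) : ℕ := (vEB ε t).idxOf p

/-- `A` is a set of vertices occupying consecutive positions in `vEB_ε(t)`. -/
def MemInterval (ε : ℝ) (t : OTree) (A : Set (List ℕ)) : Prop :=
  ∃ i n, A = {p | p ∈ ((vEB ε t).drop i).take n}

/-- The vertices of the decomposition `D` of `t`: pairs `(p, k)` of the root path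
and the height of a decomposition subtree (with recursion fuel). -/
noncomputable def decompAux (ε : ℝ) : ℕ → OTree → List (List ℕ × ℕ)
  | 0, _ => []
  | fuel+1, t =>
    if height t ≤ 1 then [([], 1)]
    else
      let m := cutLevel ε (height t)
      ([], height t) ::
        (decompAux ε fuel (trunc (m - 1) t) ++
          ((levelPaths m t).map fun q =>
            match subtreeAt? t q with
            | some s => (decompAux ε fuel s).map fun r => (q ++ r.1, r.2)
            | none => []).flatten)

/-- The vertices of the decomposition `D` of `t`. -/
noncomputable def decompVerts (ε : ℝ) (t : OTree) : List (List ℕ × ℕ) :=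
  decompAux ε (height t) t

/-- The children in the decomposition tree `D` of the decomposition vertex `(p, k)`:
the top tree followed by the bottom trees in left-to-right order. -/
noncomputable def dChildren (ε : ℝ) (t : OTree) (p : List ℕ) (k : ℕ) : List (List ℕ × ℕ) :=
  if k ≤ 1 then []
  else
    match subtreeAt? t p with
    | some s =>
      (p, cutLevel ε k) ::
        (levelPaths (cutLevel ε k) s).map fun q => (p ++ q, k - cutLevel ε k)
    | none => []

/-- The decomposition subtree `(p, k)` contains the vertex `w` of `t`;
equivalently, the leaf `{w}` of `D` lies in the subtree of `D` rooted at `(p, k)`. -/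
def DContains (p : List ℕ) (k : ℕ) (w : List ℕ) : Prop :=
  p <+: w ∧ w.length < p.length + k

/-- Vertex `v` is to the left of the branch with leaf `ℓ`. -/
def LeftOfBranch (v ℓ : List ℕ) : Prop := List.Lex (· < ·) v (ℓ.take v.length)

/-- Vertex `v` is to the right of the branch with leaf `ℓ`. -/
def RightOfBranch (v ℓ : List ℕ) : Prop := List.Lex (· < ·) (ℓ.take v.length) v

/-- Every internal vertex of `t` has at least `a` children. -/
def MinArity (t : OTree) (a : ℕ) : Prop :=
  ∀ p s, subtreeAt? t p = some s → s.children ≠ [] → a ≤ s.children.length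

/-- Every internal vertex of `t` has at most `b` children. -/
def MaxArity (t : OTree) (b : ℕ) : Prop :=
  ∀ p s, subtreeAt? t p = some s → s.children.length ≤ b

/-- `w` lies on the leftmost branch descending from `v` (always taking the leftmost child). -/
def OnLeftmostBranch (v w : List ℕ) : Prop :=
  v <+: w ∧ ∀ n (hn : n < w.length), v.length ≤ n → w.get ⟨n, hn⟩ = 0

/-- `w` lies on the rightmost branch descending from `v` (always taking the rightmost child). -/
def OnRightmostBranch (t : OTree) (v w : List ℕ) : Prop :=
  v <+: w ∧ ∀ n (hn : n < w.length), v.length ≤ n →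
    ∀ s, subtreeAt? t (w.take n) = some s → w.get ⟨n, hn⟩ + 1 = s.children.length



/-! ### Auxiliary lemmas -/

@[simp] lemma children_node (cs : List OTree) : (OTree.node cs).children = cs := rfl

open List in
lemma one_le_height : ∀ t, 1 ≤ height t
  | .node cs => by rw [height]; omega

lemma height_le_heightList {c : OTree} : ∀ cs, c ∈ cs → height c ≤ heightList cs := by
  intro cs hc
  induction cs with
  | nil => cases hc
  | cons a l ih =>
    rw [heightList]
    rcases List.mem_cons.mp hc with h | h
    · subst h; exact le_max_left _ _
    · exact le_trans (ih h) (le_max_right _ _)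

lemma heightList_le {n : ℕ} : ∀ cs, (∀ c ∈ cs, height c ≤ n) → heightList cs ≤ n := by
  intro cs
  induction cs with
  | nil => intro _; rw [heightList]; omega
  | cons a l ih =>
    intro h
    rw [heightList]
    exact max_le (h a List.mem_cons_self) (ih fun c hc => h c (List.mem_cons_of_mem _ hc))

lemma children_eq_nil_of_height_le_one : ∀ t : OTree, height t ≤ 1 → t.children = [] := by
  rintro ⟨cs⟩ h
  cases cs with
  | nil => rfl
  | cons a l =>
    exfalso
    rw [height, heightList] at h
    have := one_le_height a
    omega

lemma subtreeAt?_cons_some {t : OTree} {i : ℕ} {c : OTree} (h : t.children[i]? = some c)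
    (p : List ℕ) : subtreeAt? t (i :: p) = subtreeAt? c p := by
  show (match t.children[i]? with | some c => subtreeAt? c p | none => none) = _
  rw [h]

lemma subtreeAt?_cons_none {t : OTree} {i : ℕ} (h : t.children[i]? = none)
    (p : List ℕ) : subtreeAt? t (i :: p) = none := by
  show (match t.children[i]? with | some c => subtreeAt? c p | none => none) = _
  rw [h]

lemma height_subtreeAt : ∀ (q : List ℕ) (t s : OTree),
    subtreeAt? t q = some s → height s + q.length ≤ height t := by
  intro q
  induction q with
  | nil =>
    intro t s h
    rw [subtreeAt?] at h
    cases h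
    simp
  | cons i p ih =>
    intro t s h
    cases hc : t.children[i]? with
    | none => rw [subtreeAt?_cons_none hc] at h; cases h
    | some c =>
      rw [subtreeAt?_cons_some hc] at h
      have h1 := ih c s h
      have hm : c ∈ t.children := by
        obtain ⟨hlt, he⟩ := (List.getElem?_eq_some_iff).mp hc
        exact he ▸ List.getElem_mem _
      obtain ⟨cs⟩ := t
      have h2 := height_le_heightList cs hm
      rw [height]
      simp only [List.length_cons]
      omega

lemma height_trunc_le : ∀ (k : ℕ) (t : OTree), height (trunc k t) ≤ k + 1 := by
  intro k
  induction k with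
  | zero => intro t; rw [trunc, height, heightList]
  | succ k ih =>
    intro t
    rw [trunc, height]
    have h : heightList ((OTree.children t).map (trunc k)) ≤ k + 1 :=
      heightList_le _ (by
        intro c hc
        obtain ⟨a, _, rfl⟩ := List.mem_map.mp hc
        exact ih a)
    omega

lemma length_of_mem_levelPaths : ∀ (m : ℕ) (t : OTree) (p : List ℕ),
    p ∈ levelPaths m t → p.length = m := by
  intro m
  induction m with
  | zero =>
    intro t p hp
    rw [levelPaths] at hp
    simp only [List.mem_singleton] at hp
    subst hp; rfl
  | succ m ih =>
    intro t p hp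
    rw [levelPaths] at hp
    obtain ⟨l, hl, hpl⟩ := List.mem_flatten.mp hp
    obtain ⟨ic, _, rfl⟩ := List.mem_map.mp hl
    obtain ⟨q, hq, rfl⟩ := List.mem_map.mp hpl
    simp [ih _ _ hq]

lemma mem_enum_getElem? {α : Type*} {l : List α} {i : ℕ} {c : α}
    (h : (c, i) ∈ l.zipIdx) : l[i]? = some c := by
  exact List.mem_zipIdx_iff_getElem?.mp h

lemma isSome_of_mem_levelPaths : ∀ (m : ℕ) (t : OTree) (q : List ℕ),
    q ∈ levelPaths m t → (subtreeAt? t q).isSome := by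
  intro m
  induction m with
  | zero =>
    intro t q hq
    rw [levelPaths] at hq
    simp only [List.mem_singleton] at hq
    subst hq
    rw [subtreeAt?]; rfl
  | succ m ih =>
    intro t q hq
    rw [levelPaths] at hq
    obtain ⟨l, hl, hql⟩ := List.mem_flatten.mp hq
    obtain ⟨⟨c, i⟩, hic, rfl⟩ := List.mem_map.mp hl
    obtain ⟨q', hq', rfl⟩ := List.mem_map.mp hql
    have hc : t.children[i]? = some c := mem_enum_getElem? hic
    rw [subtreeAt?_cons_some hc]
    exact ih c q' hq'

lemma mem_levelPaths_of_isVertex : ∀ (p : List ℕ) (t : OTree),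
    IsVertex t p → p ∈ levelPaths p.length t := by
  intro p
  induction p with
  | nil => intro t _; rw [List.length_nil, levelPaths]; exact List.mem_singleton_self _
  | cons i p' ih =>
    intro t hv
    rw [IsVertex] at hv
    cases hc : t.children[i]? with
    | none => rw [subtreeAt?_cons_none hc] at hv; cases hv
    | some c =>
      rw [subtreeAt?_cons_some hc] at hv
      have hmem := ih c hv
      rw [List.length_cons, levelPaths]
      apply List.mem_flatten.mpr
      refine ⟨(levelPaths p'.length c).map (i :: ·), ?_, List.mem_map_of_mem hmem⟩
      apply List.mem_map.mpr
      refine ⟨(c, i), ?_, rfl⟩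
      exact List.mem_zipIdx_iff_getElem?.mpr hc

lemma pairwise_fst_lt_enumFrom {α : Type*} : ∀ (l : List α) (n : ℕ),
    List.Pairwise (fun a b => a.2 < b.2) (l.zipIdx n) := by
  intro l
  induction l with
  | nil => intro n; exact List.Pairwise.nil
  | cons a l ih =>
    intro n
    rw [List.zipIdx_cons]
    refine List.Pairwise.cons ?_ (ih (n + 1))
    rintro ⟨x, i⟩ hx
    have := (List.mem_zipIdx hx).1
    show n < i
    omega

lemma pairwise_fst_lt_enum {α : Type*} (l : List α) :
    List.Pairwise (fun a b => a.2 < b.2) l.zipIdx :=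
  pairwise_fst_lt_enumFrom l 0

lemma pairwise_lex_levelPaths : ∀ (m : ℕ) (t : OTree),
    List.Pairwise (List.Lex (· < ·)) (levelPaths m t) := by
  intro m
  induction m with
  | zero => intro t; rw [levelPaths]; exact List.pairwise_singleton _ _
  | succ m ih =>
    intro t
    rw [levelPaths, List.pairwise_flatten]
    constructor
    · intro l hl
      obtain ⟨ic, _, rfl⟩ := List.mem_map.mp hl
      rw [List.pairwise_map]
      exact (ih ic.1).imp (fun h => List.Lex.cons h)
    · rw [List.pairwise_map]
      refine (pairwise_fst_lt_enum t.children).imp ?_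
      intro a b hab x hx y hy
      obtain ⟨p, _, rfl⟩ := List.mem_map.mp hx
      obtain ⟨q, _, rfl⟩ := List.mem_map.mp hy
      exact List.Lex.rel hab

lemma flatMap_congr' {α β : Type*} {l : List α} {f g : α → List β}
    (h : ∀ a ∈ l, f a = g a) : l.flatMap f = l.flatMap g := by
  rw [List.flatMap_def, List.flatMap_def, List.map_congr_left h]

lemma levelPaths_succ_flatMap (j : ℕ) (t : OTree) :
    levelPaths (j + 1) t =
      t.children.zipIdx.flatMap fun ic => (levelPaths j ic.1).map (ic.2 :: ·) := by
  rw [levelPaths, ← List.flatMap_def]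

lemma levelPaths_add : ∀ (m k : ℕ) (t : OTree),
    levelPaths (m + k) t =
      ((levelPaths m t).map fun q =>
        match subtreeAt? t q with
        | some s => (levelPaths k s).map (q ++ ·)
        | none => []).flatten := by
  intro m
  induction m with
  | zero =>
    intro k t
    rw [Nat.zero_add]
    show levelPaths k t =
      ((levelPaths 0 t).map fun q =>
        match subtreeAt? t q with
        | some s => (levelPaths k s).map (q ++ ·)
        | none => []).flatten
    rw [levelPaths]
    show levelPaths k t = ((levelPaths k t).map (([] : List ℕ) ++ ·)) ++ []
    simp
  | succ m ih =>
    intro k t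
    rw [← List.flatMap_def]
    have hrw : m + 1 + k = (m + k) + 1 := by omega
    rw [hrw, levelPaths_succ_flatMap (m + k) t, levelPaths_succ_flatMap m t,
      List.flatMap_assoc]
    apply flatMap_congr'
    rintro ⟨c, i⟩ hic
    have hc : t.children[i]? = some c := mem_enum_getElem? hic
    rw [ih k c, ← List.flatMap_def, List.map_flatMap, List.flatMap_map]
    apply flatMap_congr'
    intro q hq
    show ((match subtreeAt? c q with
      | some s => (levelPaths k s).map (q ++ ·)
      | none => []).map (i :: ·)) =
      (match subtreeAt? t (i :: q) with
      | some s => (levelPaths k s).map ((i :: q) ++ ·)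
      | none => [])
    rw [subtreeAt?_cons_some hc]
    cases subtreeAt? c q with
    | none => rfl
    | some s => simp [List.map_map, Function.comp_def]

lemma levelPaths_trunc : ∀ (d k : ℕ) (t : OTree), d ≤ k →
    levelPaths d (trunc k t) = levelPaths d t := by
  intro d
  induction d with
  | zero => intro k t _; rw [levelPaths, levelPaths]
  | succ d ih =>
    intro k t hdk
    obtain ⟨k', rfl⟩ : ∃ k', k = k' + 1 := ⟨k - 1, by omega⟩
    rw [levelPaths, levelPaths, trunc, children_node, List.zipIdx_map]
    rw [List.map_map]
    congr 1
    apply List.map_congr_left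
    rintro ⟨c, i⟩ hic
    show ((levelPaths d (trunc k' c)).map (i :: ·)) = (levelPaths d c).map (i :: ·)
    rw [ih k' c (by omega)]

lemma one_le_cutLevel (ε : ℝ) (h : ℕ) : 1 ≤ cutLevel ε h := le_max_right _ _

lemma cutLevel_lt {ε : ℝ} (hε0 : 0 < ε) (hε1 : ε ≤ 1/2) {h : ℕ} (hh : 2 ≤ h) :
    cutLevel ε h < h := by
  rw [cutLevel]
  have hhR : (2 : ℝ) ≤ (h : ℝ) := by exact_mod_cast hh
  have h1 : ε * (h : ℝ) < (h : ℝ) := by nlinarith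
  have h2 : ⌊ε * (h : ℝ)⌋₊ < h :=
    (Nat.floor_lt (by positivity)).mpr h1
  omega

lemma length_lt_of_mem_vEBAux {ε : ℝ} (hε0 : 0 < ε) (hε1 : ε ≤ 1/2) :
    ∀ (f : ℕ) (t : OTree) (p : List ℕ), p ∈ vEBAux ε f t → p.length < height t := by
  intro f
  induction f with
  | zero => intro t p hp; rw [vEBAux] at hp; cases hp
  | succ f ih =>
    intro t p hp
    by_cases h1 : height t ≤ 1
    · simp only [vEBAux, if_pos h1, List.mem_singleton] at hp
      subst hp
      exact one_le_height t
    · simp only [vEBAux, if_neg h1] at hp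
      set m := cutLevel ε (height t) with hm
      have hmlt : m < height t := cutLevel_lt hε0 hε1 (by omega)
      rcases List.mem_append.mp hp with hp | hp
      · have h2 := ih _ _ hp
        have h3 := height_trunc_le (m - 1) t
        have h4 := one_le_cutLevel ε (height t)
        rw [← hm] at h4
        omega
      · obtain ⟨l, hl, hpl⟩ := List.mem_flatten.mp hp
        obtain ⟨q, hq, rfl⟩ := List.mem_map.mp hl
        have hqlen := length_of_mem_levelPaths m t q hq
        cases hs : subtreeAt? t q with
        | none => rw [hs] at hpl; cases hpl
        | some s =>
          rw [hs] at hpl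
          obtain ⟨r, hr, rfl⟩ := List.mem_map.mp hpl
          have h2 := ih _ _ hr
          have h3 := height_subtreeAt q t s hs
          rw [List.length_append]
          omega

lemma filter_vEBAux {ε : ℝ} (hε0 : 0 < ε) (hε1 : ε ≤ 1/2) :
    ∀ (f : ℕ) (t : OTree) (d : ℕ), height t ≤ f →
      (vEBAux ε f t).filter (fun p => decide (p.length = d)) = levelPaths d t := by
  intro f
  induction f with
  | zero => intro t d h; exact absurd h (by have := one_le_height t; omega)
  | succ f ih =>
    intro t d hf
    by_cases h1 : height t ≤ 1
    · simp only [vEBAux, if_pos h1]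
      cases d with
      | zero => rw [levelPaths]; rfl
      | succ e =>
        have hc := children_eq_nil_of_height_le_one t h1
        rw [levelPaths, hc]
        rfl
    · simp only [vEBAux, if_neg h1]
      set m := cutLevel ε (height t) with hm
      have hm1 : 1 ≤ m := one_le_cutLevel ε (height t)
      have hmlt : m < height t := cutLevel_lt hε0 hε1 (by omega)
      have hft : height (trunc (m - 1) t) ≤ f := by
        have := height_trunc_le (m - 1) t
        omega
      rw [List.filter_append]
      by_cases hd : d < m
      · have hb : ((levelPaths m t).map fun q =>
            match subtreeAt? t q with
            | some s => (vEBAux ε f s).map (q ++ ·)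
            | none => []).flatten.filter (fun p => decide (p.length = d)) = [] := by
          rw [List.filter_eq_nil_iff]
          intro p hp
          obtain ⟨l, hl, hpl⟩ := List.mem_flatten.mp hp
          obtain ⟨q, hq, rfl⟩ := List.mem_map.mp hl
          have hqlen := length_of_mem_levelPaths m t q hq
          cases hs : subtreeAt? t q with
          | none => rw [hs] at hpl; cases hpl
          | some s =>
            rw [hs] at hpl
            obtain ⟨r, hr, rfl⟩ := List.mem_map.mp hpl
            simp only [decide_eq_true_eq, List.length_append]
            omega
        rw [hb, ih _ _ hft, levelPaths_trunc d (m - 1) t (by omega), List.append_nil]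
      · push_neg at hd
        have htop : (vEBAux ε f (trunc (m - 1) t)).filter
            (fun p => decide (p.length = d)) = [] := by
          rw [List.filter_eq_nil_iff]
          intro p hp
          have h2 := length_lt_of_mem_vEBAux hε0 hε1 _ _ _ hp
          have h3 := height_trunc_le (m - 1) t
          simp only [decide_eq_true_eq]
          omega
        rw [htop, List.nil_append, List.filter_flatten, List.map_map]
        have hcomp := levelPaths_add m (d - m) t
        rw [Nat.add_sub_cancel' hd] at hcomp
        rw [hcomp]
        congr 1
        apply List.map_congr_left
        intro q hq
        have hqlen := length_of_mem_levelPaths m t q hq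
        have hqs := isSome_of_mem_levelPaths m t q hq
        cases hs : subtreeAt? t q with
        | none => rw [hs] at hqs; cases hqs
        | some s =>
          simp only [Function.comp_apply, hs]
          rw [List.filter_map]
          have hsf : height s ≤ f := by
            have := height_subtreeAt q t s hs
            omega
          have hcg : ∀ r ∈ vEBAux ε f s,
              ((fun p => decide (p.length = d)) ∘ (q ++ ·)) r
                = decide (r.length = d - m) := by
            intro r _
            simp only [Function.comp_apply, List.length_append, decide_eq_decide]
            omega
          rw [List.filter_congr hcg, ih s (d - m) hsf]

/-- For every memory interval `A` and every level `L` of `T`, ordered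
left-to-right, the intersection `A ∩ L` is a contiguous subsequence of the level. -/
theorem memInterval_inter_level_contiguous
    (ε : ℝ) (hε0 : 0 < ε) (hε1 : ε ≤ 1/2) (t : OTree) (ht : Uniform t)
    (A : Set (List ℕ)) (hA : MemInterval ε t A)
    (u v w : List ℕ) (hu : IsVertex t u) (hv : IsVertex t v) (hw : IsVertex t w)
    (huv : u.length = v.length) (hvw : v.length = w.length)
    (hluv : List.Lex (· < ·) u v) (hlvw : List.Lex (· < ·) v w)
    (huA : u ∈ A) (hwA : w ∈ A) :
    v ∈ A := by
  obtain ⟨i, n, rfl⟩ := hA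
  set L := vEB ε t with hL
  set d := v.length with hd
  have hud : u.length = d := huv
  have hwd : w.length = d := hvw.symm
  have hfil : L.filter (fun p => decide (p.length = d)) = levelPaths d t :=
    filter_vEBAux hε0 hε1 (height t) t d le_rfl
  have hpw : L.Pairwise
      (fun x y => x.length = d → y.length = d → List.Lex (· < ·) x y) := by
    have := List.pairwise_filter.mp (hfil ▸ pairwise_lex_levelPaths d t)
    exact this.imp fun h h1 h2 => h (by simpa using h1) (by simpa using h2)
  have hvL : v ∈ L := by
    have h1 : v ∈ levelPaths d t := mem_levelPaths_of_isVertex v t hv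
    rw [← hfil] at h1
    exact List.mem_of_mem_filter h1
  simp only [Set.mem_setOf_eq] at huA hwA ⊢
  obtain ⟨b, hbL, hbv⟩ := List.mem_iff_getElem.mp hvL
  obtain ⟨j, hj, hju⟩ := List.mem_iff_getElem.mp huA
  obtain ⟨j', hj', hjw⟩ := List.mem_iff_getElem.mp hwA
  have hjn : j < n ∧ i + j < L.length := by
    simp only [List.length_take, List.length_drop] at hj
    omega
  have hjn' : j' < n ∧ i + j' < L.length := by
    simp only [List.length_take, List.length_drop] at hj'
    omega
  have hju2 : L[i + j]'hjn.2 = u := by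
    rw [List.getElem_take, List.getElem_drop] at hju
    exact hju
  have hjw2 : L[i + j']'hjn'.2 = w := by
    rw [List.getElem_take, List.getElem_drop] at hjw
    exact hjw
  have pairR := List.pairwise_iff_getElem.mp hpw
  have hasym : ∀ x y : List ℕ, List.Lex (· < ·) x y → List.Lex (· < ·) y x → False := by
    intro x y h1 h2
    exact (List.Lex.asymm (· < ·)).asymm x y h1 h2
  have h1 : i + j < b := by
    rcases lt_trichotomy (i + j) b with h | h | h
    · exact h
    · exfalso
      have : u = v := by rw [← hju2, ← hbv]; congr 1
      exact hasym u v hluv (this ▸ hluv)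
    · exfalso
      have := pairR b (i + j) hbL hjn.2 h
      rw [hbv, hju2] at this
      exact hasym u v hluv (this rfl hud)
  have h2 : b < i + j' := by
    rcases lt_trichotomy b (i + j') with h | h | h
    · exact h
    · exfalso
      have : v = w := by rw [← hbv, ← hjw2]; congr 1
      exact hasym v w hlvw (this ▸ hlvw)
    · exfalso
      have := pairR (i + j') b hjn'.2 hbL h
      rw [hbv, hjw2] at this
      exact hasym v w hlvw (this hwd rfl)
  apply List.mem_iff_getElem.mpr
  have hlen : b - i < ((L.drop i).take n).length := by
    simp only [List.length_take, List.length_drop]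
    omega
  refine ⟨b - i, hlen, ?_⟩
  rw [List.getElem_take, List.getElem_drop]
  have heq : i + (b - i) = b := by omega
  simp only [heq]
  exact hbv

end VEB
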